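/- Let B: I → (0,∞) and S: I → ℝ be differentiable functions on an open interval I ⊆ (0,∞) satisfying r⁴·B'(r) + (d/dr)(r⁶·S(r)²/B(r)) = 0 and (d/dr)(r³·S(r)/B(r)) = 0 on I. Then B is constant on I and r ↦ r³·S(r) is constant on I; i.e. B = b₀ and S = s₀/r³ for constants b₀ > 0 and s₀ ∈ ℝ. -/

import Mathlib

open Real Set

lemma const_on_Ioo_aux {a b : ℝ} {f : ℝ → ℝ}
    (hd : ∀ x ∈ Ioo a b, DifferentiableAt ℝ f x)
    (h0 : ∀ x ∈ Ioo a b, deriv f x = 0)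
    {x y : ℝ} (hx : x ∈ Ioo a b) (hy : y ∈ Ioo a b) : f x = f y := by
  refine (convex_Ioo a b).is_const_of_fderivWithin_eq_zero
    (fun z hz => (hd z hz).differentiableWithinAt) (fun z hz => ?_) hx hy
  rw [fderivWithin_of_isOpen isOpen_Ioo hz, ← toSpanSingleton_deriv, h0 z hz]
  ext t
  simp

/-- If `B : (a,b) → (0,∞)` and `S : (a,b) → ℝ` (with `(a,b) ⊆ (0,∞)`) are
differentiable and satisfy `r⁴B' + (r⁶S²/B)' = 0` and `(r³S/B)' = 0`, then `B` is constant and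
`r ↦ r³S(r)` is constant on `(a,b)`; i.e. `B = b₀` and `S = s₀/r³` with `b₀ > 0`. -/
theorem E_zero_branch_B_S
    (a b : ℝ) (ha : 0 ≤ a)
    (B S : ℝ → ℝ)
    (hBpos : ∀ r ∈ Ioo a b, 0 < B r)
    (hBdiff : ∀ r ∈ Ioo a b, DifferentiableAt ℝ B r)
    (hSdiff : ∀ r ∈ Ioo a b, DifferentiableAt ℝ S r)
    (heom : ∀ r ∈ Ioo a b,
      r ^ 4 * deriv B r + deriv (fun s => s ^ 6 * S s ^ 2 / B s) r = 0)
    (haxion : ∀ r ∈ Ioo a b,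
      deriv (fun s => s ^ 3 * S s / B s) r = 0) :
    ∃ b₀ : ℝ, 0 < b₀ ∧ ∃ s₀ : ℝ, ∀ r ∈ Ioo a b, B r = b₀ ∧ r ^ 3 * S r = s₀ := by
  by_cases hne : (Ioo a b).Nonempty
  · obtain ⟨r₀, hr₀⟩ := hne
    set g : ℝ → ℝ := fun s => s ^ 3 * S s / B s with hg
    have hgdiff : ∀ r ∈ Ioo a b, DifferentiableAt ℝ g r := fun r hr => by
      exact (((differentiableAt_id.pow 3).mul (hSdiff r hr)).div (hBdiff r hr)
        (hBpos r hr).ne')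
    -- h = g^2 * B near each point of Ioo
    have hEq : ∀ r ∈ Ioo a b,
        (fun s => s ^ 6 * S s ^ 2 / B s) =ᶠ[nhds r] (fun s => g s ^ 2 * B s) := by
      intro r hr
      filter_upwards [isOpen_Ioo.mem_nhds hr] with s hs
      have hBs := (hBpos s hs).ne'
      field_simp [hg]
      rw [hg]
      field_simp
    have hderiv_h : ∀ r ∈ Ioo a b,
        deriv (fun s => s ^ 6 * S s ^ 2 / B s) r = g r ^ 2 * deriv B r := by
      intro r hr
      rw [Filter.EventuallyEq.deriv_eq (hEq r hr)]
      rw [deriv_fun_mul (c := fun s => g s ^ 2) (((hgdiff r hr).pow 2)) (hBdiff r hr),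
        deriv_fun_pow (hgdiff r hr) 2, haxion r hr]
      ring
    have hB' : ∀ r ∈ Ioo a b, deriv B r = 0 := by
      intro r hr
      have h := heom r hr
      rw [hderiv_h r hr] at h
      have hr0 : 0 < r := lt_of_le_of_lt ha hr.1
      have hfac : (r ^ 4 + g r ^ 2) * deriv B r = 0 := by linarith
      have hpos : 0 < r ^ 4 + g r ^ 2 := by positivity
      exact (mul_eq_zero.mp hfac).resolve_left hpos.ne'
    have hBconst : ∀ r ∈ Ioo a b, B r = B r₀ := fun r hr =>
      const_on_Ioo_aux hBdiff hB' hr hr₀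
    have hgconst : ∀ r ∈ Ioo a b, g r = g r₀ := fun r hr =>
      const_on_Ioo_aux hgdiff haxion hr hr₀
    refine ⟨B r₀, hBpos r₀ hr₀, g r₀ * B r₀, fun r hr => ⟨hBconst r hr, ?_⟩⟩
    have hBr := (hBpos r hr).ne'
    have : g r * B r = r ^ 3 * S r := by field_simp [hg]; rw [hg]; field_simp
    rw [← this, hgconst r hr, hBconst r hr]
  · exact ⟨1, one_pos, 0, fun r hr => absurd ⟨r, hr⟩ hne⟩
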